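/- Let n ≥ 2 be even and let A_n be the n×n upper-shift matrix over ℂ. Then any two solutions of the linear equation defining the Lie algebra of Sol_{A_n} commute: if X, Y ∈ M_n(ℂ) satisfy Xᵀ A_n + A_n X = 0 and Yᵀ A_n + A_n Y = 0, then X·Y = Y·X. In particular, the Lie algebra {X ∈ M_n(ℂ) | Xᵀ A_n + A_n X = 0} is abelian. -/

import Mathlib

open Matrix

/-- The `n × n` nilpotent upper-shift matrix `A_n`. -/
def shiftMat (n : ℕ) : Matrix (Fin n) (Fin n) ℂ :=
  Matrix.of fun i j => if (j : ℕ) = (i : ℕ) + 1 then 1 else 0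

namespace Stmt13Aux

/-- The shape function of a solution determined by a "first row" `r`. -/
def phi (r : ℕ → ℂ) (a b : ℕ) : ℂ :=
  if Even a then (if a ≤ b then r (b - a) else 0)
  else (if b ≤ a then -(r (a - b)) else 0)

/-- ℕ-indexed extension of a matrix by zero. -/
def ext {n : ℕ} (X : Matrix (Fin n) (Fin n) ℂ) (i j : ℕ) : ℂ :=
  if h : i < n ∧ j < n then X ⟨i, h.1⟩ ⟨j, h.2⟩ else 0

lemma ext_eq {n : ℕ} (X : Matrix (Fin n) (Fin n) ℂ) {i j : ℕ} (hi : i < n) (hj : j < n) :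
    ext X i j = X ⟨i, hi⟩ ⟨j, hj⟩ := dif_pos ⟨hi, hj⟩

lemma ext_zero {n : ℕ} (X : Matrix (Fin n) (Fin n) ℂ) {i j : ℕ} (h : ¬(i < n ∧ j < n)) :
    ext X i j = 0 := dif_neg h

section main
variable {n : ℕ} (X : Matrix (Fin n) (Fin n) ℂ)

lemma hpt (hX : Xᵀ * shiftMat n + shiftMat n * X = 0) (a b : Fin n) :
    (∑ k, X k a * shiftMat n k b) + (∑ k, shiftMat n a k * X k b) = 0 := by
  have h := congrFun (congrFun hX a) b
  simpa [Matrix.add_apply, Matrix.mul_apply, Matrix.transpose_apply] using h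

lemma sum1 (a b : Fin n) :
    (∑ k, X k a * shiftMat n k b) = if h : 1 ≤ (b : ℕ) then X ⟨(b : ℕ) - 1, Nat.lt_of_le_of_lt (Nat.sub_le _ _) b.2⟩ a else 0 := by
  rcases b with ⟨bv, hb⟩
  match bv with
  | 0 => simp [shiftMat]
  | (m+1) =>
    rw [dif_pos (Nat.succ_le_succ (Nat.zero_le m) : 1 ≤ ((⟨m+1, hb⟩ : Fin n) : ℕ))]
    rw [Finset.sum_eq_single (⟨m, by omega⟩ : Fin n)]
    · simp [shiftMat]
    · intro k _ hk
      have : ((⟨m+1, hb⟩ : Fin n) : ℕ) ≠ (k : ℕ) + 1 := by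
        intro hc
        apply hk
        apply Fin.ext
        simpa using hc.symm
      simp [shiftMat, this]
      intro hc; exact absurd (Fin.ext hc.symm) hk
    · simp

lemma sum2 (a b : Fin n) :
    (∑ k, shiftMat n a k * X k b) = if h : (a : ℕ) + 1 < n then X ⟨(a : ℕ) + 1, h⟩ b else 0 := by
  by_cases h : (a : ℕ) + 1 < n
  · rw [dif_pos h]
    rw [Finset.sum_eq_single (⟨(a : ℕ) + 1, h⟩ : Fin n)]
    · simp [shiftMat]
    · intro k _ hk
      have : ((k : ℕ)) ≠ (a : ℕ) + 1 := by
        intro hc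
        exact hk (Fin.ext (by simpa using hc))
      simp [shiftMat, this]
    · simp
  · rw [dif_neg h]
    apply Finset.sum_eq_zero
    intro k _
    have : ((k : ℕ)) ≠ (a : ℕ) + 1 := by omega
    simp [shiftMat, this]

lemma rel (hX : Xᵀ * shiftMat n + shiftMat n * X = 0) (i j : ℕ) (hj : j + 1 < n) :
    ext X j i + ext X (i + 1) (j + 1) = 0 := by
  by_cases hi : i < n
  · have h := hpt X hX ⟨i, hi⟩ ⟨j + 1, hj⟩
    rw [sum1, sum2] at h
    rw [dif_pos (by simp : 1 ≤ (((⟨j+1, hj⟩ : Fin n)) : ℕ))] at h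
    simp only at h
    by_cases h2 : i + 1 < n
    · rw [dif_pos h2] at h
      rw [ext_eq X (by omega : j < n) hi, ext_eq X h2 hj]
      convert h using 3 <;> simp
    · rw [dif_neg h2] at h
      rw [ext_eq X (by omega : j < n) hi, ext_zero X (by omega)]
      convert h using 3 <;> simp
  · rw [ext_zero X (by omega), ext_zero X (by omega)]
    ring

lemma col0 (hX : Xᵀ * shiftMat n + shiftMat n * X = 0) (i : ℕ) (hi : 1 ≤ i) :
    ext X i 0 = 0 := by
  by_cases h : i < n
  · have h0 : 0 < n := by omega
    have hpt' := hpt X hX ⟨i - 1, by omega⟩ ⟨0, h0⟩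
    rw [sum1, sum2] at hpt'
    rw [dif_neg (by simp)] at hpt'
    have hlt : ((⟨i - 1, by omega⟩ : Fin n) : ℕ) + 1 < n := by simpa using by omega
    rw [dif_pos hlt] at hpt'
    rw [ext_eq X h h0]
    have hfix : (⟨((⟨i - 1, by omega⟩ : Fin n) : ℕ) + 1, hlt⟩ : Fin n) = ⟨i, h⟩ := by
      apply Fin.ext; simp; omega
    rw [hfix] at hpt'
    linear_combination hpt'
  · exact ext_zero X (by omega)

lemma lastcol (hX : Xᵀ * shiftMat n + shiftMat n * X = 0) (j : ℕ) (hj : j + 1 < n) :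
    ext X j (n - 1) = 0 := by
  have h := rel X hX (n - 1) j hj
  rw [ext_zero X (by omega : ¬((n-1)+1 < n ∧ j + 1 < n))] at h
  simpa using h

lemma diag (hX : Xᵀ * shiftMat n + shiftMat n * X = 0) (i j : ℕ)
    (hi : i + 2 < n) (hj : j + 1 < n) :
    ext X j i = ext X (j + 2) (i + 2) := by
  have h1 := rel X hX i j hj
  have h2 := rel X hX (j + 1) (i + 1) (by omega)
  linear_combination h1 - h2

lemma zdiag (hX : Xᵀ * shiftMat n + shiftMat n * X = 0) (heven : Even n) :
    ∀ d row col, n - col ≤ d → row < n → col < n → Even row → row ≤ col →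
      Odd (col - row) → ext X row col = 0 := by
  intro d
  induction d with
  | zero => intro row col hd _ hcol _ _ _; omega
  | succ d ih =>
    intro row col hd hrow hcol hre hle hodd
    have hrowlt : row < col := by
      rcases hodd with ⟨t, ht⟩; omega
    by_cases hc : col = n - 1
    · subst hc
      exact lastcol X hX row (by omega)
    · have hcolodd : Odd col := by
        have : col = row + (col - row) := by omega
        rw [this]
        exact hre.add_odd hodd
      have hc2 : col + 2 < n := by
        rcases heven with ⟨m, hm⟩
        rcases hcolodd with ⟨t, ht⟩
        omega
      rw [diag X hX col row hc2 (by omega)]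
      apply ih (row + 2) (col + 2) (by omega) (by omega) (by omega)
        (by exact hre.add (by decide)) (by omega)
        (by have : col + 2 - (row + 2) = col - row := by omega
            rw [this]; exact hodd)

/-- the first-row function -/
def rr : ℕ → ℂ := fun m => ext X 0 m

lemma rodd (hX : Xᵀ * shiftMat n + shiftMat n * X = 0) (heven : Even n) :
    ∀ m, Odd m → rr X m = 0 := by
  intro m hm
  by_cases h : m < n
  · exact zdiag X hX heven n 0 m (by omega) (by omega) h (by decide) (by omega) (by simpa using hm)
  · exact ext_zero X (by omega)

lemma rodd' (hX : Xᵀ * shiftMat n + shiftMat n * X = 0) (heven : Even n) :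
    ∀ m, m % 2 = 1 → rr X m = 0 := by
  intro m hm
  exact rodd X hX heven m (Nat.odd_iff.mpr hm)

lemma phi_step (r : ℕ → ℂ) (hr : ∀ m, m % 2 = 1 → r m = 0) (i j : ℕ) :
    phi r (i + 1) (j + 1) = -(phi r j i) := by
  unfold phi
  simp only [Nat.even_add_one, Nat.even_iff]
  split_ifs <;>
    first
      | ring1
      | omega
      | (exfalso; omega)
      | (congr 1 <;> (first | rfl | omega))
      | (rw [neg_inj]; congr 1 <;> (first | rfl | omega))
      | (rw [neg_neg]; congr 1 <;> (first | rfl | omega))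
      | (rw [neg_eq_zero]; apply hr; omega)
      | (apply hr; omega)
      | (symm; rw [neg_eq_zero]; apply hr; omega)
      | (symm; apply hr; omega)
      | (symm; rw [neg_eq_zero, neg_eq_zero]; apply hr; omega)
      | (rw [neg_eq_zero, neg_eq_zero]; apply hr; omega)
      | (rw [show -(0:ℂ) = 0 by ring]; apply hr; omega)
      | (rw [neg_inj]; apply hr; omega)

lemma charExt (hX : Xᵀ * shiftMat n + shiftMat n * X = 0) (heven : Even n) :
    ∀ s i j, i + j = s → i < n → j < n → ext X i j = phi (rr X) i j := by
  have hr := rodd' X hX heven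
  intro s
  induction s using Nat.strong_induction_on with
  | _ s ih =>
    intro i j hs hi hj
    match i, j with
    | 0, j =>
      simp [phi, rr]
    | (i+1), 0 =>
      rw [col0 X hX (i+1) (by omega)]
      unfold phi
      split_ifs with h1 h2
      · omega
      · rfl
      · rw [hr (i + 1 - 0) (by simp only [Nat.even_iff] at h1; omega)]; ring
      · rfl
    | (i+1), (j+1) =>
      have hrel := rel X hX i j hj
      have hIH := ih (j + i) (by omega) j i rfl (by omega) (by omega)
      have : ext X (i+1) (j+1) = -(ext X j i) := by linear_combination hrel
      rw [this, hIH, ← phi_step (rr X) hr i j]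

lemma entry (hX : Xᵀ * shiftMat n + shiftMat n * X = 0) (heven : Even n) (a b : Fin n) :
    X a b = phi (rr X) (a : ℕ) (b : ℕ) := by
  rw [← charExt X hX heven ((a:ℕ)+(b:ℕ)) a b rfl a.2 b.2, ext_eq X a.2 b.2]

end main

lemma van (r1 r2 : ℕ → ℂ) (hz1 : ∀ m, m % 2 = 1 → r1 m = 0) (a b k : ℕ)
    (ha : a < k) (hb : b < k) : phi r1 a k * phi r2 k b = 0 := by
  unfold phi
  simp only [Nat.even_iff]
  split_ifs <;>
    first
      | ring1
      | omega
      | (exfalso; omega)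
      | (apply mul_eq_zero_of_left; apply hz1; omega)

lemma key (r1 r2 : ℕ → ℂ) (h1 : ∀ m, m % 2 = 1 → r1 m = 0) (h2 : ∀ m, m % 2 = 1 → r2 m = 0)
    (i j k k' : ℕ) (hk : k + k' = i + j) :
    phi r1 i k' * phi r2 k' j = phi r2 i k * phi r1 k j := by
  unfold phi
  simp only [Nat.even_iff]
  split_ifs <;>
    first
      | rfl
      | ring1
      | omega
      | (exfalso; omega)
      | (simp (disch := omega) only [h1, h2, zero_mul, mul_zero, neg_zero, neg_eq_zero,
          mul_neg, neg_mul, neg_neg]; done)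
      | (simp (disch := omega) only [h1, h2, zero_mul, mul_zero, neg_zero, neg_eq_zero,
          mul_neg, neg_mul, neg_neg]; ring1)
      | ((try simp only [mul_neg, neg_mul, neg_neg, neg_inj]);
         first
           | (rw [mul_comm]; congr 1 <;> (congr 1 <;> (first | rfl | omega)))
           | (congr 1 <;> (congr 1 <;> (first | rfl | omega))))

end Stmt13Aux

open Stmt13Aux in
/-- For even `n ≥ 2`, any two solutions of `Xᵀ A_n + A_n X = 0` commute;
in particular the Lie algebra `sol_{A_n}` is abelian. -/
theorem stmt_13 (n : ℕ) (hn : 2 ≤ n) (heven : Even n)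
    (X Y : Matrix (Fin n) (Fin n) ℂ)
    (hX : Xᵀ * shiftMat n + shiftMat n * X = 0)
    (hY : Yᵀ * shiftMat n + shiftMat n * Y = 0) :
    X * Y = Y * X := by
  have hrX := rodd' X hX heven
  have hrY := rodd' Y hY heven
  ext a b
  rw [Matrix.mul_apply, Matrix.mul_apply]
  simp only [entry X hX heven, entry Y hY heven]
  set rX := rr X with hrXdef
  set rY := rr Y with hrYdef
  set F : ℕ → ℂ := fun t => phi rX (a : ℕ) t * phi rY t (b : ℕ) with hF
  set G : ℕ → ℂ := fun t => phi rY (a : ℕ) t * phi rX t (b : ℕ) with hG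
  have hFn : (∑ k : Fin n, phi rX (a:ℕ) (k:ℕ) * phi rY (k:ℕ) (b:ℕ)) = ∑ k ∈ Finset.range n, F k :=
    Fin.sum_univ_eq_sum_range F n
  have hGn : (∑ k : Fin n, phi rY (a:ℕ) (k:ℕ) * phi rX (k:ℕ) (b:ℕ)) = ∑ k ∈ Finset.range n, G k :=
    Fin.sum_univ_eq_sum_range G n
  rw [hFn, hGn]
  set m := (a : ℕ) + (b : ℕ) + 1 with hm
  set L := n + m with hL
  have hFvan : ∀ t, (a : ℕ) < t → (b : ℕ) < t → F t = 0 := fun t h1 h2 => van rX rY hrX _ _ _ h1 h2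
  have hGvan : ∀ t, (a : ℕ) < t → (b : ℕ) < t → G t = 0 := fun t h1 h2 => van rY rX hrY _ _ _ h1 h2
  have eF1 : ∑ k ∈ Finset.range n, F k = ∑ k ∈ Finset.range L, F k :=
    Finset.sum_subset (Finset.range_subset_range.mpr (by omega))
      (fun x _ hx => hFvan x (by simp at hx; omega) (by simp at hx; omega))
  have eF2 : ∑ k ∈ Finset.range m, F k = ∑ k ∈ Finset.range L, F k :=
    Finset.sum_subset (Finset.range_subset_range.mpr (by omega))
      (fun x _ hx => hFvan x (by simp at hx; omega) (by simp at hx; omega))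
  have eG1 : ∑ k ∈ Finset.range n, G k = ∑ k ∈ Finset.range L, G k :=
    Finset.sum_subset (Finset.range_subset_range.mpr (by omega))
      (fun x _ hx => hGvan x (by simp at hx; omega) (by simp at hx; omega))
  have eG2 : ∑ k ∈ Finset.range m, G k = ∑ k ∈ Finset.range L, G k :=
    Finset.sum_subset (Finset.range_subset_range.mpr (by omega))
      (fun x _ hx => hGvan x (by simp at hx; omega) (by simp at hx; omega))
  rw [eF1, ← eF2, eG1, ← eG2]
  rw [← Finset.sum_range_reflect F m]
  apply Finset.sum_congr rfl
  intro k hkmem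
  simp only [Finset.mem_range] at hkmem
  have : m - 1 - k = (a : ℕ) + (b : ℕ) - k := by omega
  rw [this]
  exact key rX rY hrX hrY (a : ℕ) (b : ℕ) k ((a:ℕ) + (b:ℕ) - k) (by omega)
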